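/- Let x, y : ℤ → ℂ be sequences with x(i) ≠ 0 and y(i) ≠ 0 for all integers i, and let P, Q : ℤ → ℂ be the unique nowhere-zero functions with P(0) = Q(0) = 1 and P(i) = P(i−1)·x(i), Q(i) = Q(i−1)·y(i) for all integers i (so P(n) and Q(k) realize the bilateral products ∏_{i=1}^{n} x(i) and ∏_{i=1}^{k} y(i)). Define α(k,n) = P(n)/Q(k) for all integers k, n, and let β : ℤ × ℤ → ℂ be antisymmetric (β(n,k) = −β(k,n)). Then α and β satisfy the triple sum identity (TSI) if and only if for all integers k ≤ n: β(k,n) = ∑_{i=k+1}^{n} β(i−1,i) · P(n)·P(k) / (P(i)·P(i−1)). -/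

import Mathlib

private lemma sum_Icc_bot (f : ℤ → ℂ) {a b : ℤ} (h : a ≤ b) :
    ∑ i ∈ Finset.Icc a b, f i = f a + ∑ i ∈ Finset.Icc (a + 1) b, f i := by
  have : Finset.Icc a b = insert a (Finset.Icc (a + 1) b) := by
    ext i; simp [Finset.mem_Icc]; omega
  rw [this, Finset.sum_insert (by simp)]

private lemma sum_Icc_top (f : ℤ → ℂ) {a b : ℤ} (h : a ≤ b + 1) :
    ∑ i ∈ Finset.Icc a (b + 1), f i = (∑ i ∈ Finset.Icc a b, f i) + f (b + 1) := by
  have : Finset.Icc a (b + 1) = insert (b + 1) (Finset.Icc a b) := by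
    ext i; simp [Finset.mem_Icc]; omega
  rw [this, Finset.sum_insert (by simp)]
  ring

/-- Corollary 3.6 (Wang–Ma): with `α k n = P n / Q k` where `P`, `Q` are the
nowhere-zero bilateral products of the nonzero sequences `x`, `y`
(`P 0 = Q 0 = 1`, `P i = P (i-1) * x i`, `Q i = Q (i-1) * y i`), and `β`
antisymmetric, `α` and `β` satisfy the triple sum identity if and only if
`β k n = ∑_{i=k+1}^{n} β (i-1) i * P n * P k / (P i * P (i-1))` for all `k ≤ n`. -/
theorem bilateral_product_TSI_iff
    (x y : ℤ → ℂ) (hx : ∀ i : ℤ, x i ≠ 0) (hy : ∀ i : ℤ, y i ≠ 0)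
    (P Q : ℤ → ℂ)
    (hP0 : P 0 = 1) (hQ0 : Q 0 = 1)
    (hPne : ∀ i : ℤ, P i ≠ 0) (hQne : ∀ i : ℤ, Q i ≠ 0)
    (hP : ∀ i : ℤ, P i = P (i - 1) * x i)
    (hQ : ∀ i : ℤ, Q i = Q (i - 1) * y i)
    (β : ℤ → ℤ → ℂ)
    (hanti : ∀ n k : ℤ, β n k = -β k n) :
    (∀ n k p q : ℤ,
        (P p / Q n) * β q k + (P q / Q n) * β k p + (P k / Q n) * β p q = 0)
      ↔ (∀ k n : ℤ, k ≤ n →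
          β k n =
            ∑ i ∈ Finset.Icc (k + 1) n,
              β (i - 1) i * (P n * P k / (P i * P (i - 1)))) := by
  constructor
  · intro h k
    refine Int.le_induction (motive := fun n _ => β k n =
        ∑ i ∈ Finset.Icc (k + 1) n, β (i - 1) i * (P n * P k / (P i * P (i - 1)))) ?_ ?_
    · show β k k = _
      rw [Finset.Icc_eq_empty (by omega : ¬ k + 1 ≤ k), Finset.sum_empty]
      linear_combination (hanti k k) / 2
    · intro n hn ih
      rw [sum_Icc_top _ (by omega : k + 1 ≤ n + 1)]
      have hsum : ∑ i ∈ Finset.Icc (k + 1) n,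
          β (i - 1) i * (P (n + 1) * P k / (P i * P (i - 1)))
          = (P (n + 1) / P n) * ∑ i ∈ Finset.Icc (k + 1) n,
              β (i - 1) i * (P n * P k / (P i * P (i - 1))) := by
        rw [Finset.mul_sum]
        refine Finset.sum_congr rfl fun i _ => ?_
        have hi1 := hPne i
        have hi2 := hPne (i - 1)
        have hi3 := hPne n
        field_simp
      rw [hsum, ← ih]
      have key := h 0 n k (n + 1)
      rw [hQ0] at key
      have e1 := hanti (n + 1) n
      have e2 := hanti n k
      have hPn := hPne n
      have hPn1 := hPne (n + 1)
      simp only [add_sub_cancel_right]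
      field_simp
      linear_combination key - P k * e1
        - P (n+1) * e2
  · intro h
    set c : ℤ → ℂ := fun i => β (i - 1) i / (P i * P (i - 1)) with hc
    set E : ℤ → ℂ := fun n =>
      (∑ i ∈ Finset.Icc 1 n, c i) - (∑ i ∈ Finset.Icc (n + 1) 0, c i) with hE
    have hstep : ∀ n : ℤ, E (n + 1) = E n + c (n + 1) := by
      intro n
      rcases le_or_gt 0 n with h0 | h0
      · have e1 : ∑ i ∈ Finset.Icc 1 (n + 1), c i
            = (∑ i ∈ Finset.Icc 1 n, c i) + c (n + 1) :=
          sum_Icc_top c (by omega : (1:ℤ) ≤ n + 1)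
        have e2 : Finset.Icc (n + 1 + 1) (0 : ℤ) = ∅ := Finset.Icc_eq_empty (by omega)
        have e3 : Finset.Icc (n + 1) (0 : ℤ) = ∅ := Finset.Icc_eq_empty (by omega)
        simp only [hE, e1, e2, e3, Finset.sum_empty]
        ring
      · have e1 : Finset.Icc (1 : ℤ) (n + 1) = ∅ := Finset.Icc_eq_empty (by omega)
        have e2 : Finset.Icc (1 : ℤ) n = ∅ := Finset.Icc_eq_empty (by omega)
        have e3 : ∑ i ∈ Finset.Icc (n + 1) 0, c i
            = c (n + 1) + ∑ i ∈ Finset.Icc (n + 1 + 1) 0, c i :=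
          sum_Icc_bot c (by omega)
        simp only [hE, e1, e2, e3, Finset.sum_empty]
        ring
    have hEdiff : ∀ k n : ℤ, k ≤ n → E n - E k = ∑ i ∈ Finset.Icc (k + 1) n, c i := by
      intro k
      refine Int.le_induction
        (motive := fun n _ => E n - E k = ∑ i ∈ Finset.Icc (k + 1) n, c i) ?_ ?_
      · show E k - E k = _
        rw [Finset.Icc_eq_empty (by omega : ¬ k + 1 ≤ k), Finset.sum_empty]; ring
      · intro n hn ih
        rw [sum_Icc_top _ (by omega : k + 1 ≤ n + 1), ← ih, hstep n]
        ring
    have hβ : ∀ k n : ℤ, k ≤ n → β k n = P k * P n * (E n - E k) := by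
      intro k n hkn
      rw [hEdiff k n hkn, h k n hkn, Finset.mul_sum]
      refine Finset.sum_congr rfl fun i _ => ?_
      have := hPne i
      have := hPne (i - 1)
      simp only [hc]
      field_simp
    have hβall : ∀ k n : ℤ, β k n = P k * P n * (E n - E k) := by
      intro k n
      rcases le_total k n with hkn | hnk
      · exact hβ k n hkn
      · rw [hanti k n, hβ n k hnk]; ring
    intro N K Pp Qq
    rw [hβall Qq K, hβall K Pp, hβall Pp Qq]
    ring
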